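/- Let a, b, n be positive integers with a - b ≥ 2 and 2n > a + b. Then sin(πa/n) + sin(πb/n) < sin(π(a-1)/n) + sin(π(b+1)/n). -/

import Mathlib

open Real

lemma real_sin_add_sin (x y : ℝ) :
    Real.sin x + Real.sin y = 2 * Real.sin ((x + y) / 2) * Real.cos ((x - y) / 2) := by
  have h := Real.sin_sub_sin x (-y)
  simpa [sub_neg_eq_add, ← sub_eq_add_neg] using h

theorem stmt_0 (a b n : ℕ) (ha : 0 < a) (hb : 0 < b) (hn : 0 < n)
    (hab : b + 2 ≤ a) (hsum : a + b < 2 * n) :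
    sin (π * a / n) + sin (π * b / n) <
      sin (π * ((a : ℝ) - 1) / n) + sin (π * ((b : ℝ) + 1) / n) := by
  have hN : (0:ℝ) < n := by exact_mod_cast hn
  have hab' : (b:ℝ) + 2 ≤ a := by exact_mod_cast hab
  have hsum' : (a:ℝ) + b < 2 * n := by exact_mod_cast hsum
  have hB : (1:ℝ) ≤ b := by exact_mod_cast hb
  rw [real_sin_add_sin, real_sin_add_sin]
  have hsum_eq : (π * a / n + π * b / n) / 2 = (π * ((a:ℝ) - 1) / n + π * ((b:ℝ) + 1) / n) / 2 := by
    ring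
  rw [← hsum_eq]
  have hS : 0 < Real.sin ((π * a / n + π * b / n) / 2) := by
    apply Real.sin_pos_of_pos_of_lt_pi
    · have : 0 < π := pi_pos
      positivity
    · rw [div_lt_iff₀ (by norm_num : (0:ℝ) < 2)]
      rw [← add_div, div_lt_iff₀ hN]
      nlinarith [pi_pos]
  have hcos : Real.cos ((π * a / n - π * b / n) / 2) <
      Real.cos ((π * ((a:ℝ) - 1) / n - π * ((b:ℝ) + 1) / n) / 2) := by
    apply Real.cos_lt_cos_of_nonneg_of_le_pi
    · have h : π * ((a:ℝ) - 1) / n - π * ((b:ℝ) + 1) / n = π * ((a:ℝ) - b - 2) / n := by ring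
      rw [h]
      have : (0:ℝ) ≤ (a:ℝ) - b - 2 := by linarith
      positivity
    · rw [div_le_iff₀ (by norm_num : (0:ℝ) < 2), div_sub_div_same, div_le_iff₀ hN]
      nlinarith [pi_pos]
    · have h1 : π * ((a:ℝ) - 1) / n - π * ((b:ℝ) + 1) / n = π * ((a:ℝ) - b - 2) / n := by ring
      have h2 : π * a / n - π * b / n = π * ((a:ℝ) - b) / n := by ring
      rw [h1, h2]
      have := pi_pos
      have hlt : π * ((a:ℝ) - b - 2) < π * ((a:ℝ) - b) := by nlinarith
      have h3 : (0:ℝ) < 2 * n := by positivity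
      calc π * ((a:ℝ) - b - 2) / n / 2 = π * ((a:ℝ) - b - 2) / (2 * n) := by ring
        _ < π * ((a:ℝ) - b) / (2 * n) := by exact div_lt_div_of_pos_right hlt h3
        _ = π * ((a:ℝ) - b) / n / 2 := by ring
  calc 2 * Real.sin _ * Real.cos ((π * ((a:ℝ) - 1) / n - π * ((b:ℝ) + 1) / n) / 2)
      > 2 * Real.sin _ * Real.cos ((π * a / n - π * b / n) / 2) := by
        apply mul_lt_mul_of_pos_left hcos (by positivity)
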